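/- Let 0 < q < 1/2, p = 1 - q, s = 4pq. Then I_s(z, 1/2) ~ s^z / √(π(1-s)z) as z → +∞; in particular I_s(z,1/2) decays exponentially in z. -/

import Mathlib

open Filter Real


lemma gamma_ratio : Tendsto (fun z : ℝ => Real.Gamma (z + 1/2) / (Real.Gamma z * Real.sqrt z))
    atTop (nhds 1) := by
  have hlow : Tendsto (fun z : ℝ => Real.sqrt (z / (z + 1/2))) atTop (nhds 1) := by
    have h1 : Tendsto (fun z : ℝ => z / (z + 1/2)) atTop (nhds 1) := by
      have := Filter.Tendsto.div_atTop (tendsto_const_nhds (x := (1/2 : ℝ)))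
        (tendsto_atTop_add_const_right atTop (1/2) tendsto_id)
      have h2 : Tendsto (fun z : ℝ => 1 - (1/2) / (z + 1/2)) atTop (nhds 1) := by
        simpa using tendsto_const_nhds.sub this
      apply h2.congr'
      filter_upwards [eventually_gt_atTop (0:ℝ)] with z hz
      field_simp
      ring
    have := (Real.continuous_sqrt.tendsto 1).comp h1
    simpa [Function.comp_def] using this
  refine tendsto_of_tendsto_of_tendsto_of_le_of_le' hlow tendsto_const_nhds ?_ ?_
  · filter_upwards [eventually_gt_atTop (0:ℝ)] with z hz
    -- lower bound: Γ(z+1) ≤ Γ(z+1/2) * √(z+1/2)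
    have hG : 0 < Real.Gamma z := Real.Gamma_pos_of_pos hz
    have hGh : 0 < Real.Gamma (z + 1/2) := Real.Gamma_pos_of_pos (by linarith)
    have key := Real.Gamma_mul_add_mul_le_rpow_Gamma_mul_rpow_Gamma
      (s := z + 1/2) (t := z + 3/2) (a := 1/2) (b := 1/2)
      (by linarith) (by linarith) one_half_pos one_half_pos (by norm_num)
    have e1 : (1/2 : ℝ) * (z + 1/2) + 1/2 * (z + 3/2) = z + 1 := by ring
    have e2 : Real.Gamma (z + 3/2) = (z + 1/2) * Real.Gamma (z + 1/2) := by
      have := Real.Gamma_add_one (s := z + 1/2) (by positivity)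
      rw [show z + 3/2 = (z + 1/2) + 1 by ring, this]
    have e3 : Real.Gamma (z + 1) = z * Real.Gamma z := Real.Gamma_add_one hz.ne'
    rw [e1, e2, e3] at key
    have key2 : z * Real.Gamma z ≤ Real.Gamma (z + 1/2) * Real.sqrt (z + 1/2) := by
      calc z * Real.Gamma z ≤ Real.Gamma (z+1/2) ^ (1/2:ℝ) * ((z+1/2) * Real.Gamma (z+1/2)) ^ (1/2:ℝ) := key
      _ = Real.Gamma (z + 1/2) * Real.sqrt (z + 1/2) := by
          rw [Real.mul_rpow (by positivity) hGh.le]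
          simp only [← Real.sqrt_eq_rpow]
          calc Real.sqrt (Real.Gamma (z+1/2)) * (Real.sqrt (z+1/2) * Real.sqrt (Real.Gamma (z+1/2)))
              = (Real.sqrt (Real.Gamma (z+1/2)) * Real.sqrt (Real.Gamma (z+1/2))) * Real.sqrt (z+1/2) := by ring
            _ = Real.Gamma (z+1/2) * Real.sqrt (z+1/2) := by rw [Real.mul_self_sqrt hGh.le]
    rw [Real.sqrt_div hz.le, div_le_div_iff₀ (by positivity) (by positivity)]
    calc Real.sqrt z * (Real.Gamma z * Real.sqrt z)
        = (Real.sqrt z * Real.sqrt z) * Real.Gamma z := by ring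
      _ = z * Real.Gamma z := by rw [Real.mul_self_sqrt hz.le]
      _ ≤ _ := key2
  · filter_upwards [eventually_gt_atTop (0:ℝ)] with z hz
    have hG : 0 < Real.Gamma z := Real.Gamma_pos_of_pos hz
    have key := Real.Gamma_mul_add_mul_le_rpow_Gamma_mul_rpow_Gamma
      (s := z) (t := z + 1) (a := 1/2) (b := 1/2)
      hz (by linarith) one_half_pos one_half_pos (by norm_num)
    have e1 : (1/2 : ℝ) * z + 1/2 * (z + 1) = z + 1/2 := by ring
    have e3 : Real.Gamma (z + 1) = z * Real.Gamma z := Real.Gamma_add_one hz.ne'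
    rw [e1, e3] at key
    have key2 : Real.Gamma (z + 1/2) ≤ Real.Gamma z * Real.sqrt z := by
      calc Real.Gamma (z + 1/2) ≤ Real.Gamma z ^ (1/2:ℝ) * (z * Real.Gamma z) ^ (1/2:ℝ) := key
      _ = Real.Gamma z * Real.sqrt z := by
          rw [Real.mul_rpow hz.le hG.le]
          simp only [← Real.sqrt_eq_rpow]
          calc Real.sqrt (Real.Gamma z) * (Real.sqrt z * Real.sqrt (Real.Gamma z))
              = (Real.sqrt (Real.Gamma z) * Real.sqrt (Real.Gamma z)) * Real.sqrt z := by ring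
            _ = Real.Gamma z * Real.sqrt z := by rw [Real.mul_self_sqrt hG.le]
    rw [div_le_one (by positivity)]
    exact key2


lemma laplace {s : ℝ} (hs0 : 0 < s) (hs1 : s < 1) :
    Tendsto (fun z : ℝ => z * (∫ t in (0:ℝ)..s, t ^ (z-1) * (1-t) ^ (1/2 - 1 : ℝ)) *
      Real.sqrt (1 - s) / s ^ z) atTop (nhds 1) := by
  have h1s : (0:ℝ) < 1 - s := by linarith
  have hW : 0 < Real.sqrt (1 - s) := Real.sqrt_pos.mpr h1s
  have hW2 : Real.sqrt (1 - s) ^ 2 = 1 - s := Real.sq_sqrt h1s.le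
  have hrpow : ∀ x : ℝ, 0 ≤ x → x ^ (1/2 - 1 : ℝ) = (Real.sqrt x)⁻¹ := by
    intro x hx
    rw [show (1/2 - 1 : ℝ) = -(1/2) by norm_num, Real.rpow_neg hx, ← Real.sqrt_eq_rpow]
  have hC : 0 ≤ s / (2 * (1 - s)) := by positivity
  have hlowt : Tendsto (fun z : ℝ => 1 - (s / (2 * (1 - s))) / (z + 1)) atTop (nhds 1) := by
    have := Filter.Tendsto.div_atTop (tendsto_const_nhds (x := s / (2 * (1 - s))))
      (tendsto_atTop_add_const_right atTop 1 tendsto_id)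
    simpa using tendsto_const_nhds.sub this
  refine tendsto_of_tendsto_of_tendsto_of_le_of_le' hlowt tendsto_const_nhds ?_ ?_
  · -- lower bound
    filter_upwards [eventually_ge_atTop (2:ℝ)] with z hz2
    have hz : (0:ℝ) < z := by linarith
    have hz1 : (1:ℝ) < z := by linarith
    have hSz : (0:ℝ) < s ^ z := Real.rpow_pos_of_pos hs0 z
    have key : ∀ t ∈ Set.Icc (0:ℝ) s,
        (1-s) ^ (1/2 - 1 : ℝ) - (1/(2 * Real.sqrt (1-s) ^ 3)) * (s - t)
          ≤ (1-t) ^ (1/2 - 1 : ℝ) := by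
      intro t ht
      obtain ⟨ht0, hts⟩ := ht
      have h1t : (0:ℝ) < 1 - t := by linarith
      rw [hrpow _ h1s.le, hrpow _ h1t.le]
      have ha : 0 < Real.sqrt (1 - t) := Real.sqrt_pos.mpr h1t
      have ha2 : Real.sqrt (1 - t) ^ 2 = 1 - t := Real.sq_sqrt h1t.le
      have hba : Real.sqrt (1-s) ≤ Real.sqrt (1-t) := Real.sqrt_le_sqrt (by linarith)
      have hst : s - t = Real.sqrt (1-t) ^ 2 - Real.sqrt (1-s) ^ 2 := by rw [ha2, hW2]; ring
      rw [hst]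
      have expand : (Real.sqrt (1-t))⁻¹ - ((Real.sqrt (1-s))⁻¹
            - (1/(2 * Real.sqrt (1-s) ^ 3)) * (Real.sqrt (1-t) ^ 2 - Real.sqrt (1-s) ^ 2))
          = (Real.sqrt (1-t) - Real.sqrt (1-s)) ^ 2 * (Real.sqrt (1-t) + 2 * Real.sqrt (1-s))
            / (2 * Real.sqrt (1-t) * Real.sqrt (1-s) ^ 3) := by
        field_simp
        ring
      have pos : 0 ≤ (Real.sqrt (1-t) - Real.sqrt (1-s)) ^ 2 * (Real.sqrt (1-t) + 2 * Real.sqrt (1-s))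
            / (2 * Real.sqrt (1-t) * Real.sqrt (1-s) ^ 3) := by positivity
      linarith
    have hcont1 : Continuous (fun t : ℝ => t ^ (z-1)) :=
      Real.continuous_rpow_const (by linarith)
    have hcontg : ContinuousOn (fun t : ℝ => (1-t) ^ (1/2 - 1 : ℝ)) (Set.Icc 0 s) := by
      intro t ht
      exact (((continuous_const.sub continuous_id').continuousAt).rpow_const
        (Or.inl (by show (1:ℝ) - t ≠ 0; nlinarith [ht.2]))).continuousWithinAt
    have huIcc : Set.uIcc (0:ℝ) s = Set.Icc 0 s := Set.uIcc_of_le hs0.le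
    have hint : IntervalIntegrable (fun t : ℝ => t ^ (z-1) * (1-t) ^ (1/2 - 1 : ℝ))
        MeasureTheory.volume 0 s := by
      apply ContinuousOn.intervalIntegrable
      rw [huIcc]
      exact (hcont1.continuousOn).mul hcontg
    have hintl : IntervalIntegrable
        (fun t : ℝ => ((1-s) ^ (1/2 - 1 : ℝ) - (1/(2 * Real.sqrt (1-s) ^ 3)) * s) * t ^ (z-1)
          + (1/(2 * Real.sqrt (1-s) ^ 3)) * t ^ z)
        MeasureTheory.volume 0 s :=
      (((continuous_const.mul hcont1).add
        (continuous_const.mul (Real.continuous_rpow_const (by linarith)))).intervalIntegrable _ _)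
    have hv1 : ∫ t in (0:ℝ)..s, t ^ (z-1) = s ^ z / z := by
      rw [integral_rpow (Or.inl (by linarith)),
        Real.zero_rpow (ne_of_gt (by linarith : (0:ℝ) < z - 1 + 1)),
        show z - 1 + 1 = z by ring]
      simp
    have hv2 : ∫ t in (0:ℝ)..s, t ^ z = s ^ z * s / (z+1) := by
      rw [integral_rpow (Or.inl (by linarith)),
        Real.zero_rpow (ne_of_gt (by linarith : (0:ℝ) < z + 1)), Real.rpow_add_one hs0.ne' z]
      simp
    have hlowint : ∫ t in (0:ℝ)..s,
        (((1-s) ^ (1/2 - 1 : ℝ) - (1/(2 * Real.sqrt (1-s) ^ 3)) * s) * t ^ (z-1)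
          + (1/(2 * Real.sqrt (1-s) ^ 3)) * t ^ z)
        = ((1-s) ^ (1/2 - 1 : ℝ) - (1/(2 * Real.sqrt (1-s) ^ 3)) * s) * (s ^ z / z)
          + (1/(2 * Real.sqrt (1-s) ^ 3)) * (s ^ z * s / (z+1)) := by
      rw [intervalIntegral.integral_add
        (f := fun t => ((1-s) ^ (1/2 - 1 : ℝ) - (1/(2 * Real.sqrt (1-s) ^ 3)) * s) * t ^ (z-1))
        (g := fun t => (1/(2 * Real.sqrt (1-s) ^ 3)) * t ^ z) ((continuous_const.mul hcont1).intervalIntegrable _ _)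
        ((continuous_const.mul (Real.continuous_rpow_const (by linarith : (0:ℝ) ≤ z))).intervalIntegrable _ _),
        intervalIntegral.integral_const_mul, intervalIntegral.integral_const_mul, hv1, hv2]
    have hmono : ∫ t in (0:ℝ)..s,
        (((1-s) ^ (1/2 - 1 : ℝ) - (1/(2 * Real.sqrt (1-s) ^ 3)) * s) * t ^ (z-1)
          + (1/(2 * Real.sqrt (1-s) ^ 3)) * t ^ z)
        ≤ ∫ t in (0:ℝ)..s, t ^ (z-1) * (1-t) ^ (1/2 - 1 : ℝ) := by
      apply intervalIntegral.integral_mono_on hs0.le hintl hint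
      intro t ht
      rcases eq_or_lt_of_le ht.1 with h0 | h0
      · rw [← h0, Real.zero_rpow (sub_pos.mpr hz1).ne', Real.zero_rpow hz.ne']
        simp
      · have htz : t ^ z = t ^ (z-1) * t := by
          rw [← Real.rpow_add_one h0.ne' (z-1), show z - 1 + 1 = z by ring]
        rw [htz]
        have htp : 0 ≤ t ^ (z-1) := Real.rpow_nonneg h0.le _
        nlinarith [mul_le_mul_of_nonneg_left (key t ht) htp]
    have gen : ∀ w Sz : ℝ, 0 < w → 0 < Sz → w ^ 2 = 1 - s →
        z * ((w⁻¹ - (1/(2 * w ^ 3)) * s) * (Sz / z) + (1/(2 * w ^ 3)) * (Sz * s / (z+1))) * w / Sz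
          = 1 - (s / (2 * (1 - s))) / (z + 1) := by
      intro w Sz hw hSzp hw2
      rw [← hw2]
      field_simp
      ring
    calc 1 - (s / (2 * (1 - s))) / (z + 1)
        = z * (((1-s) ^ (1/2 - 1 : ℝ) - (1/(2 * Real.sqrt (1-s) ^ 3)) * s) * (s ^ z / z)
            + (1/(2 * Real.sqrt (1-s) ^ 3)) * (s ^ z * s / (z+1))) * Real.sqrt (1-s) / s ^ z := by
          rw [hrpow _ h1s.le]
          exact (gen (Real.sqrt (1-s)) (s ^ z) hW hSz hW2).symm
      _ ≤ z * (∫ t in (0:ℝ)..s, t ^ (z-1) * (1-t) ^ (1/2 - 1 : ℝ)) * Real.sqrt (1-s) / s ^ z := by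
          rw [← hlowint]
          gcongr
  · -- upper bound
    filter_upwards [eventually_ge_atTop (2:ℝ)] with z hz2
    have hz : (0:ℝ) < z := by linarith
    have hSz : (0:ℝ) < s ^ z := Real.rpow_pos_of_pos hs0 z
    have hcont1 : Continuous (fun t : ℝ => t ^ (z-1)) :=
      Real.continuous_rpow_const (by linarith)
    have hcontg : ContinuousOn (fun t : ℝ => (1-t) ^ (1/2 - 1 : ℝ)) (Set.Icc 0 s) := by
      intro t ht
      exact (((continuous_const.sub continuous_id').continuousAt).rpow_const
        (Or.inl (by show (1:ℝ) - t ≠ 0; nlinarith [ht.2]))).continuousWithinAt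
    have huIcc : Set.uIcc (0:ℝ) s = Set.Icc 0 s := Set.uIcc_of_le hs0.le
    have hint : IntervalIntegrable (fun t : ℝ => t ^ (z-1) * (1-t) ^ (1/2 - 1 : ℝ))
        MeasureTheory.volume 0 s := by
      apply ContinuousOn.intervalIntegrable
      rw [huIcc]
      exact (hcont1.continuousOn).mul hcontg
    have hv1 : ∫ t in (0:ℝ)..s, t ^ (z-1) = s ^ z / z := by
      rw [integral_rpow (Or.inl (by linarith)),
        Real.zero_rpow (ne_of_gt (by linarith : (0:ℝ) < z - 1 + 1)),
        show z - 1 + 1 = z by ring]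
      simp
    have hub : (∫ t in (0:ℝ)..s, t ^ (z-1) * (1-t) ^ (1/2 - 1 : ℝ))
        ≤ (1-s) ^ (1/2 - 1 : ℝ) * (s ^ z / z) := by
      rw [← hv1, ← intervalIntegral.integral_const_mul]
      apply intervalIntegral.integral_mono_on hs0.le hint
        ((continuous_const.mul hcont1).intervalIntegrable _ _)
      intro t ht
      have hle : (1-t) ^ (1/2 - 1 : ℝ) ≤ (1-s) ^ (1/2 - 1 : ℝ) :=
        Real.rpow_le_rpow_of_nonpos h1s (by linarith [ht.2]) (by norm_num)
      have htp : 0 ≤ t ^ (z-1) := Real.rpow_nonneg ht.1 _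
      calc t ^ (z-1) * (1-t) ^ (1/2 - 1 : ℝ) ≤ t ^ (z-1) * (1-s) ^ (1/2 - 1 : ℝ) :=
            mul_le_mul_of_nonneg_left hle htp
        _ = (1-s) ^ (1/2 - 1 : ℝ) * t ^ (z-1) := by ring
    calc z * (∫ t in (0:ℝ)..s, t ^ (z-1) * (1-t) ^ (1/2 - 1 : ℝ)) * Real.sqrt (1-s) / s ^ z
        ≤ z * ((1-s) ^ (1/2 - 1 : ℝ) * (s ^ z / z)) * Real.sqrt (1-s) / s ^ z := by gcongr
      _ = 1 := by
          rw [hrpow _ h1s.le]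
          field_simp


/-- Regularized incomplete beta function. -/
noncomputable def regIncBeta (x a b : ℝ) : ℝ :=
  (Real.Gamma (a + b) / (Real.Gamma a * Real.Gamma b)) *
    ∫ t in (0:ℝ)..x, t ^ (a - 1) * (1 - t) ^ (b - 1)

theorem stmt8 (q : ℝ) (hq0 : 0 < q) (hq1 : q < 1/2) (p s : ℝ)
    (hp : p = 1 - q) (hs : s = 4 * p * q) :
    Tendsto (fun z : ℝ =>
        regIncBeta s z (1/2) / (s ^ z / Real.sqrt (π * (1 - s) * z)))
      atTop (nhds 1) := by
  have hs0 : 0 < s := by rw [hs, hp]; nlinarith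
  have hs1 : s < 1 := by rw [hs, hp]; nlinarith [sq_nonneg (1 - 2*q)]
  have h1s : (0:ℝ) < 1 - s := by linarith
  have hW : 0 < Real.sqrt (1 - s) := Real.sqrt_pos.mpr h1s
  have hmain := gamma_ratio.mul (laplace hs0 hs1)
  rw [one_mul] at hmain
  apply hmain.congr'
  filter_upwards [eventually_ge_atTop (2:ℝ)] with z hz2
  have hz : (0:ℝ) < z := by linarith
  have hG : 0 < Real.Gamma z := Real.Gamma_pos_of_pos hz
  have hSz : (0:ℝ) < s ^ z := Real.rpow_pos_of_pos hs0 z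
  have hsz : 0 < Real.sqrt z := Real.sqrt_pos.mpr hz
  have hsp : 0 < Real.sqrt π := Real.sqrt_pos.mpr Real.pi_pos
  have hsqrt : Real.sqrt (π * (1 - s) * z)
      = Real.sqrt π * Real.sqrt (1 - s) * Real.sqrt z := by
    rw [Real.sqrt_mul (by positivity), Real.sqrt_mul Real.pi_pos.le]
  rw [regIncBeta, Real.Gamma_one_half_eq, hsqrt]
  set J := ∫ t in (0:ℝ)..s, t ^ (z-1) * (1-t) ^ (1/2 - 1 : ℝ) with hJ
  set G := Real.Gamma (z + 1/2) with hGdef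
  field_simp
  linear_combination (-(G * J)) * Real.mul_self_sqrt hz.le
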